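/- Let p_s, p_e ≥ 0 with p_s + p_e ≤ 1 and let W be the substitution/erasure kernel. Let Y be a random variable taking finitely many values in lists over {0,1}, and let Y^(3) be a random variable taking values in lists over {0,1,★} with |Y^(3)| = |Y| pointwise, such that for every y with P(Y=y) > 0 and every y′ with |y′| = |y|, P(Y^(3)=y′ | Y=y) = ∏_{i=1}^{|y|} W(y_i, y′_i). Then H(Y^(3)) ≥ H(Y) − E[|Y|] · log₂((1−p_e)² + 2p_e²). -/

import Mathlib

open scoped BigOperators
open Classical

noncomputable section

/-- A finite probability space: a probability mass function on a finite type. -/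
structure FinProb (Ω : Type*) [Fintype Ω] where
  p : Ω → ℝ
  nonneg : ∀ ω, 0 ≤ p ω
  sum_one : ∑ ω, p ω = 1

variable {Ω : Type*} [Fintype Ω]

/-- Probability of an event. -/
def pr (μ : FinProb Ω) (E : Ω → Prop) : ℝ :=
  ∑ ω, if E ω then μ.p ω else 0

/-- Shannon entropy (base 2) of a random variable with finitely many values. -/
def entropy {S : Type*} (μ : FinProb Ω) (U : Ω → S) : ℝ :=
  -∑ u ∈ Finset.univ.image U,
    pr μ (fun ω => U ω = u) * Real.logb 2 (pr μ (fun ω => U ω = u))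

/-- Conditional Shannon entropy `H(U | V)`. -/
def condEntropy {S T : Type*} (μ : FinProb Ω) (U : Ω → S) (V : Ω → T) : ℝ :=
  ∑ v ∈ (Finset.univ.image V).filter (fun v => 0 < pr μ (fun ω => V ω = v)),
    pr μ (fun ω => V ω = v) *
      (-∑ u ∈ Finset.univ.image U,
        (pr μ (fun ω => U ω = u ∧ V ω = v) / pr μ (fun ω => V ω = v)) *
          Real.logb 2 (pr μ (fun ω => U ω = u ∧ V ω = v) / pr μ (fun ω => V ω = v)))

/-- Mutual information `I(U;V) = H(U) - H(U|V)`. -/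
def mutualInfo {S T : Type*} (μ : FinProb Ω) (U : Ω → S) (V : Ω → T) : ℝ :=
  entropy μ U - condEntropy μ U V

/-- Expected length of a list-valued random variable. -/
def expLen {A : Type*} (μ : FinProb Ω) (Y : Ω → List A) : ℝ :=
  ∑ ω, μ.p ω * (Y ω).length

/-- The substitution/erasure kernel on input alphabet `{0,1}` (modeled as `Bool`)
and output alphabet `{0,1,★}` (modeled as `Option Bool`, with `none` the erasure `★`):
`W b b = 1 - ps - pe`, `W b (1-b) = ps`, `W b ★ = pe`. -/
def subErsKernel (ps pe : ℝ) : Bool → Option Bool → ℝ :=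
  fun b c => match c with
  | none => pe
  | some c' => if c' = b then 1 - ps - pe else ps


section AuxStmt9
variable {Ω : Type*} [Fintype Ω]

variable (μ : FinProb Ω)

lemma pr_nonneg (E : Ω → Prop) : 0 ≤ pr μ E :=
  Finset.sum_nonneg fun ω _ => by by_cases h : E ω <;> simp [h, μ.nonneg ω]

lemma pr_congr {E F : Ω → Prop} (h : ∀ ω, E ω ↔ F ω) : pr μ E = pr μ F := by
  unfold pr; exact Finset.sum_congr rfl fun ω _ => by rw [if_congr (h ω) rfl rfl]

lemma pr_mono {E F : Ω → Prop} (h : ∀ ω, E ω → F ω) : pr μ E ≤ pr μ F := by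
  apply Finset.sum_le_sum; intro ω _
  by_cases hE : E ω
  · simp [hE, h ω hE]
  · simp only [if_neg hE]; by_cases hF : F ω <;> simp [hF, μ.nonneg ω]

lemma pr_eq_zero_of {E : Ω → Prop} (h : ∀ ω, ¬ E ω) : pr μ E = 0 := by
  unfold pr; exact Finset.sum_eq_zero fun ω _ => if_neg (h ω)

lemma pr_univ : pr μ (fun _ => True) = 1 := by
  simp [pr, μ.sum_one]

lemma pr_fiber_sum {S : Type*} [DecidableEq S] (U : Ω → S) (E : Ω → Prop) :
    ∑ u ∈ Finset.univ.image U, pr μ (fun ω => U ω = u ∧ E ω) = pr μ E := by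
  unfold pr
  rw [Finset.sum_comm]
  refine Finset.sum_congr rfl fun ω _ => ?_
  rw [Finset.sum_eq_single (U ω)]
  · by_cases hE : E ω <;> simp [hE]
  · intro u _ hu; rw [if_neg]; rintro ⟨h1, _⟩; exact hu h1.symm
  · intro h; exact absurd (Finset.mem_image_of_mem U (Finset.mem_univ ω)) h

lemma sum_fiber {S : Type*} [DecidableEq S] (U : Ω → S) (h : S → ℝ) :
    ∑ u ∈ Finset.univ.image U, pr μ (fun ω => U ω = u) * h u = ∑ ω, μ.p ω * h (U ω) := by
  unfold pr
  simp only [Finset.sum_mul, ite_mul, zero_mul]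
  rw [Finset.sum_comm]
  refine Finset.sum_congr rfl fun ω _ => ?_
  rw [Finset.sum_eq_single (U ω)]
  · simp
  · intro u _ hu; rw [if_neg]; exact fun h1 => hu (Eq.symm h1)
  · intro h; exact absurd (Finset.mem_image_of_mem U (Finset.mem_univ ω)) h


end AuxStmt9

def sersS (pe : ℝ) : Option Bool → ℝ :=
  fun c => match c with
  | none => 2 * pe
  | some _ => 1 - pe

def sersWL (ps pe : ℝ) (z : List (Option Bool)) (y : List Bool) : ℝ :=
  if y.length = z.length then ((y.zip z).map fun p => subErsKernel ps pe p.1 p.2).prod else 0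

def sersSL (pe : ℝ) (z : List (Option Bool)) : ℝ := (z.map (sersS pe)).prod

lemma exists_ofFn {α : Type*} (l : List α) : ∃ (n : ℕ) (f : Fin n → α), l = List.ofFn f :=
  ⟨l.length, l.get, (List.ofFn_get l).symm⟩

lemma zip_ofFn_prod {α β : Type*} (F : α → β → ℝ) :
    ∀ (n : ℕ) (f : Fin n → α) (g : Fin n → β),
      (((List.ofFn f).zip (List.ofFn g)).map fun p => F p.1 p.2).prod = ∏ i, F (f i) (g i) := by
  intro n
  induction n with
  | zero => intro f g; simp
  | succ n ih =>
    intro f g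
    rw [List.ofFn_succ, List.ofFn_succ (f := g)]
    simp only [List.zip_cons_cons, List.map_cons, List.prod_cons, Fin.prod_univ_succ]
    rw [ih]

variable {ps pe : ℝ}

lemma sersWL_ofFn (n : ℕ) (f : Fin n → Bool) (g : Fin n → Option Bool) :
    sersWL ps pe (List.ofFn g) (List.ofFn f) = ∏ i, subErsKernel ps pe (f i) (g i) := by
  unfold sersWL
  rw [if_pos (by simp)]
  exact zip_ofFn_prod _ n f g

lemma sersSL_ofFn (n : ℕ) (g : Fin n → Option Bool) :
    sersSL pe (List.ofFn g) = ∏ i, sersS pe (g i) := by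
  simp [sersSL, List.map_ofFn, List.prod_ofFn, Function.comp]

lemma list_eq_ofFn {α : Type*} {m : ℕ} {y : List α} (hy : y.length = m) :
    ∃ f : Fin m → α, y = List.ofFn f := by
  subst hy
  exact ⟨y.get, (List.ofFn_get y).symm⟩

lemma sers_row_sum (b : Bool) : ∑ c : Option Bool, subErsKernel ps pe b c = 1 := by
  rw [Fintype.sum_option]
  cases b <;> simp [subErsKernel, Fintype.sum_bool] <;> ring

lemma sers_col_sum (c : Option Bool) : ∑ b : Bool, subErsKernel ps pe b c = sersS pe c := by
  rcases c with _ | c'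
  · simp only [subErsKernel, sersS, Fintype.sum_bool]; ring
  · cases c' <;> simp [subErsKernel, sersS, Fintype.sum_bool] <;> ring

lemma sers_col_weight (b : Bool) :
    ∑ c : Option Bool, subErsKernel ps pe b c * Real.logb 2 (sersS pe c)
      = pe * Real.logb 2 (2 * pe) + (1 - pe) * Real.logb 2 (1 - pe) := by
  rw [Fintype.sum_option]
  cases b <;> simp [subErsKernel, sersS, Fintype.sum_bool] <;> ring

lemma pi_row_sum (n : ℕ) (f : Fin n → Bool) :
    ∑ g : Fin n → Option Bool, ∏ i, subErsKernel ps pe (f i) (g i) = 1 := by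
  classical
  rw [← Fintype.piFinset_univ,
    Finset.sum_prod_piFinset Finset.univ (fun i b => subErsKernel ps pe (f i) b)]
  simp only [sers_row_sum]
  simp

lemma pi_col_sum (n : ℕ) (g : Fin n → Option Bool) :
    ∑ f : Fin n → Bool, ∏ i, subErsKernel ps pe (f i) (g i) = ∏ i, sersS pe (g i) := by
  classical
  rw [← Fintype.piFinset_univ,
    Finset.sum_prod_piFinset Finset.univ (fun i b => subErsKernel ps pe b (g i))]
  simp only [sers_col_sum]

lemma pi_weighted (n : ℕ) (f : Fin n → Bool) :
    ∑ g : Fin n → Option Bool,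
        (∏ i, subErsKernel ps pe (f i) (g i)) * (∑ i, Real.logb 2 (sersS pe (g i)))
      = n * (pe * Real.logb 2 (2 * pe) + (1 - pe) * Real.logb 2 (1 - pe)) := by
  classical
  simp only [Finset.mul_sum]
  rw [Finset.sum_comm]
  have key : ∀ i : Fin n,
      ∑ g : Fin n → Option Bool,
        (∏ j, subErsKernel ps pe (f j) (g j)) * Real.logb 2 (sersS pe (g i))
      = pe * Real.logb 2 (2 * pe) + (1 - pe) * Real.logb 2 (1 - pe) := by
    intro i
    have step : ∀ g : Fin n → Option Bool,
        (∏ j, subErsKernel ps pe (f j) (g j)) * Real.logb 2 (sersS pe (g i))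
        = ∏ j, (subErsKernel ps pe (f j) (g j) *
            (if j = i then Real.logb 2 (sersS pe (g j)) else 1)) := by
      intro g
      rw [Finset.prod_mul_distrib, Finset.prod_ite_eq' Finset.univ i
        (fun j => Real.logb 2 (sersS pe (g j)))]
      simp
    simp only [step]
    rw [← Fintype.piFinset_univ,
      Finset.sum_prod_piFinset Finset.univ (fun j c => subErsKernel ps pe (f j) c *
        (if j = i then Real.logb 2 (sersS pe c) else 1))]
    have colval : ∀ j : Fin n,
        (∑ c : Option Bool, subErsKernel ps pe (f j) c *
          (if j = i then Real.logb 2 (sersS pe c) else 1))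
        = if j = i then pe * Real.logb 2 (2 * pe) + (1 - pe) * Real.logb 2 (1 - pe) else 1 := by
      intro j
      by_cases hj : j = i
      · rw [if_pos hj]
        subst hj
        simp only [if_true, eq_self_iff_true]
        exact sers_col_weight (f j)
      · rw [if_neg hj]
        simp only [if_neg hj, mul_one]
        exact sers_row_sum (f j)
    simp only [colval]
    rw [Finset.prod_ite_eq' Finset.univ i]
    simp
  simp only [key]
  simp only [Finset.sum_const, Finset.card_univ, Fintype.card_fin, nsmul_eq_mul]

lemma sers_nonneg (hps : 0 ≤ ps) (hpe : 0 ≤ pe) (hspe : ps + pe ≤ 1) (b : Bool) (c : Option Bool) :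
    0 ≤ subErsKernel ps pe b c := by
  rcases c with _ | c' <;> simp [subErsKernel]
  · exact hpe
  · split <;> [linarith; exact hps]

lemma sers_le_s (hps : 0 ≤ ps) (hpe : 0 ≤ pe) (hspe : ps + pe ≤ 1) (b : Bool) (c : Option Bool) :
    subErsKernel ps pe b c ≤ sersS pe c := by
  rcases c with _ | c' <;> simp [subErsKernel, sersS]
  · linarith
  · split <;> linarith

lemma sersS_nonneg (hpe : 0 ≤ pe) (hpe1 : pe ≤ 1) (c : Option Bool) : 0 ≤ sersS pe c := by
  rcases c with _ | c' <;> simp [sersS] <;> linarith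

lemma sersWL_nonneg (hps : 0 ≤ ps) (hpe : 0 ≤ pe) (hspe : ps + pe ≤ 1)
    (z : List (Option Bool)) (y : List Bool) : 0 ≤ sersWL ps pe z y := by
  unfold sersWL
  split
  · apply List.prod_nonneg
    intro x hx
    simp only [List.mem_map] at hx
    obtain ⟨p, _, rfl⟩ := hx
    exact sers_nonneg hps hpe hspe p.1 p.2
  · exact le_refl 0

lemma sersSL_nonneg (hpe : 0 ≤ pe) (hpe1 : pe ≤ 1) (z : List (Option Bool)) :
    0 ≤ sersSL pe z := by
  apply List.prod_nonneg
  intro x hx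
  simp only [List.mem_map] at hx
  obtain ⟨c, _, rfl⟩ := hx
  exact sersS_nonneg hpe hpe1 c

lemma sersSL_pos_of_WL_pos (hps : 0 ≤ ps) (hpe : 0 ≤ pe) (hspe : ps + pe ≤ 1)
    {z : List (Option Bool)} {y : List Bool} (h : 0 < sersWL ps pe z y) :
    0 < sersSL pe z := by
  obtain ⟨m, g, rfl⟩ := exists_ofFn z
  have hlen : y.length = m := by
    by_contra hc
    rw [sersWL, if_neg (by simpa using hc)] at h
    exact lt_irrefl 0 h
  obtain ⟨f, rfl⟩ := list_eq_ofFn hlen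
  rw [sersWL_ofFn] at h
  rw [sersSL_ofFn]
  apply Finset.prod_pos
  intro i _
  have hne : subErsKernel ps pe (f i) (g i) ≠ 0 := by
    intro hzero
    rw [Finset.prod_eq_zero (Finset.mem_univ i) hzero] at h
    exact lt_irrefl 0 h
  have hWpos : 0 < subErsKernel ps pe (f i) (g i) :=
    lt_of_le_of_ne (sers_nonneg hps hpe hspe _ _) (Ne.symm hne)
  exact lt_of_lt_of_le hWpos (sers_le_s hps hpe hspe _ _)

lemma sersWL_col_bound (hps : 0 ≤ ps) (hpe : 0 ≤ pe) (hspe : ps + pe ≤ 1)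
    (z : List (Option Bool)) (T : Finset (List Bool)) :
    ∑ y ∈ T, sersWL ps pe z y ≤ sersSL pe z := by
  obtain ⟨m, g, rfl⟩ := exists_ofFn z
  have h1 : ∑ y ∈ T, sersWL ps pe (List.ofFn g) y
      = ∑ y ∈ T.filter (fun y => y.length = m), sersWL ps pe (List.ofFn g) y := by
    refine (Finset.sum_subset (Finset.filter_subset _ _) ?_).symm
    intro y hy hynot
    have : ¬ y.length = m := by
      intro hl; exact hynot (Finset.mem_filter.mpr ⟨hy, hl⟩)
    rw [sersWL, if_neg (by simpa using this)]
  rw [h1]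
  have h2 : T.filter (fun y => y.length = m)
      ⊆ Finset.univ.image (fun f : Fin m → Bool => List.ofFn f) := by
    intro y hy
    obtain ⟨f, rfl⟩ := list_eq_ofFn (Finset.mem_filter.mp hy).2
    exact Finset.mem_image_of_mem _ (Finset.mem_univ f)
  calc ∑ y ∈ T.filter (fun y => y.length = m), sersWL ps pe (List.ofFn g) y
      ≤ ∑ y ∈ Finset.univ.image (fun f : Fin m → Bool => List.ofFn f),
          sersWL ps pe (List.ofFn g) y := by
        apply Finset.sum_le_sum_of_subset_of_nonneg h2
        intro y _ _
        exact sersWL_nonneg hps hpe hspe _ _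
    _ = ∑ f : Fin m → Bool, sersWL ps pe (List.ofFn g) (List.ofFn f) := by
        apply Finset.sum_image
        intro a _ b _ hab
        exact List.ofFn_injective hab
    _ = ∑ f : Fin m → Bool, ∏ i, subErsKernel ps pe (f i) (g i) := by
        simp only [sersWL_ofFn]
    _ = ∏ i, sersS pe (g i) := pi_col_sum m g
    _ = sersSL pe (List.ofFn g) := (sersSL_ofFn m g).symm

lemma sersWL_logsum (hps : 0 ≤ ps) (hpe : 0 ≤ pe) (hspe : ps + pe ≤ 1)
    (y : List Bool) (T : Finset (List (Option Bool)))
    (hT : ∀ z, z.length = y.length → z ∉ T → sersWL ps pe z y = 0) :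
    ∑ z ∈ T, sersWL ps pe z y * Real.logb 2 (sersSL pe z)
      = y.length * (pe * Real.logb 2 (2 * pe) + (1 - pe) * Real.logb 2 (1 - pe)) := by
  obtain ⟨n, f, rfl⟩ := exists_ofFn y
  have hlenY : (List.ofFn f).length = n := by simp
  have h1 : ∑ z ∈ T, sersWL ps pe z (List.ofFn f) * Real.logb 2 (sersSL pe z)
      = ∑ z ∈ T.filter (fun z => z.length = n),
          sersWL ps pe z (List.ofFn f) * Real.logb 2 (sersSL pe z) := by
    refine (Finset.sum_subset (Finset.filter_subset _ _) ?_).symm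
    intro z hz hznot
    have : ¬ z.length = n := fun hl => hznot (Finset.mem_filter.mpr ⟨hz, hl⟩)
    rw [sersWL, if_neg (by simpa using Ne.symm this), zero_mul]
  have h2 : T.filter (fun z => z.length = n)
      ⊆ Finset.univ.image (fun g : Fin n → Option Bool => List.ofFn g) := by
    intro z hz
    obtain ⟨g, rfl⟩ := list_eq_ofFn (Finset.mem_filter.mp hz).2
    exact Finset.mem_image_of_mem _ (Finset.mem_univ g)
  have h3 : ∑ z ∈ T.filter (fun z => z.length = n),
        sersWL ps pe z (List.ofFn f) * Real.logb 2 (sersSL pe z)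
      = ∑ z ∈ Finset.univ.image (fun g : Fin n → Option Bool => List.ofFn g),
          sersWL ps pe z (List.ofFn f) * Real.logb 2 (sersSL pe z) := by
    apply Finset.sum_subset h2
    intro z hz hznot
    have hzlen : z.length = n := by
      simp only [Finset.mem_image] at hz
      obtain ⟨g, _, rfl⟩ := hz
      simp
    have hzT : z ∉ T := fun hmem => hznot (Finset.mem_filter.mpr ⟨hmem, hzlen⟩)
    rw [hT z (by rw [hzlen, hlenY]) hzT, zero_mul]
  rw [h1, h3, Finset.sum_image (fun a _ b _ hab => List.ofFn_injective hab)]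
  have h4 : ∀ g : Fin n → Option Bool,
      sersWL ps pe (List.ofFn g) (List.ofFn f) * Real.logb 2 (sersSL pe (List.ofFn g))
      = (∏ i, subErsKernel ps pe (f i) (g i)) * (∑ i, Real.logb 2 (sersS pe (g i))) := by
    intro g
    rw [sersWL_ofFn, sersSL_ofFn]
    rcases eq_or_ne (∏ i, subErsKernel ps pe (f i) (g i)) 0 with hzero | hne
    · rw [hzero, zero_mul, zero_mul]
    · have hW : ∀ i ∈ Finset.univ, subErsKernel ps pe (f i) (g i) ≠ 0 :=
        Finset.prod_ne_zero_iff.mp hne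
      have hs : ∀ i ∈ (Finset.univ : Finset (Fin n)), sersS pe (g i) ≠ 0 := by
        intro i hi
        have hWpos : 0 < subErsKernel ps pe (f i) (g i) :=
          lt_of_le_of_ne (sers_nonneg hps hpe hspe _ _) (Ne.symm (hW i hi))
        exact ne_of_gt (lt_of_lt_of_le hWpos (sers_le_s hps hpe hspe _ _))
      rw [Real.logb_prod _ _ hs]
  simp only [h4]
  rw [pi_weighted n f]
  simp
lemma sersL_le_logK (hpe : 0 ≤ pe) (hpe1 : pe ≤ 1) :
    pe * Real.logb 2 (2 * pe) + (1 - pe) * Real.logb 2 (1 - pe)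
      ≤ Real.logb 2 ((1 - pe) ^ 2 + 2 * pe ^ 2) := by
  rcases eq_or_lt_of_le hpe with h0 | h0
  · rw [← h0]; norm_num
  rcases eq_or_lt_of_le hpe1 with h1 | h1
  · rw [h1]; norm_num [Real.logb_self_eq_one]
  · have hp1 : (0:ℝ) < 1 - pe := by linarith
    have hp2 : (0:ℝ) < 2 * pe := by linarith
    have hgm := Real.geom_mean_le_arith_mean2_weighted
      (le_of_lt hp1) hpe (le_of_lt hp1) (le_of_lt hp2) (by ring)
    have hposL : 0 < (1 - pe) ^ (1 - pe) * (2 * pe) ^ pe :=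
      mul_pos (Real.rpow_pos_of_pos hp1 _) (Real.rpow_pos_of_pos hp2 _)
    have hle : Real.logb 2 ((1 - pe) ^ (1 - pe) * (2 * pe) ^ pe)
        ≤ Real.logb 2 ((1 - pe) ^ 2 + 2 * pe ^ 2) := by
      apply Real.logb_le_logb_of_le (by norm_num) hposL
      calc (1 - pe) ^ (1 - pe) * (2 * pe) ^ pe
          ≤ (1 - pe) * (1 - pe) + pe * (2 * pe) := hgm
        _ = (1 - pe) ^ 2 + 2 * pe ^ 2 := by ring
    calc pe * Real.logb 2 (2 * pe) + (1 - pe) * Real.logb 2 (1 - pe)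
        = Real.logb 2 ((1 - pe) ^ (1 - pe) * (2 * pe) ^ pe) := by
          rw [Real.logb_mul (Real.rpow_pos_of_pos hp1 _).ne' (Real.rpow_pos_of_pos hp2 _).ne']
          unfold Real.logb
          rw [Real.log_rpow hp1, Real.log_rpow hp2]
          ring
      _ ≤ _ := hle
lemma kl_pointwise {a b : ℝ} (ha : 0 < a) (hb : 0 < b) :
    (a - b) / Real.log 2 ≤ a * Real.logb 2 (a / b) := by
  have hlog2 : 0 < Real.log 2 := Real.log_pos (by norm_num)
  have h1 : Real.log (b / a) ≤ b / a - 1 := Real.log_le_sub_one_of_pos (div_pos hb ha)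
  have h2 : Real.log (b / a) = Real.log b - Real.log a := Real.log_div hb.ne' ha.ne'
  have h3 : Real.log (a / b) = Real.log a - Real.log b := Real.log_div ha.ne' hb.ne'
  have h4 : a * (Real.log b - Real.log a) ≤ a * (b / a - 1) :=
    mul_le_mul_of_nonneg_left (h2 ▸ h1) ha.le
  have h5 : a * (b / a - 1) = b - a := by field_simp
  have h6 : a - b ≤ a * (Real.log a - Real.log b) := by nlinarith
  rw [Real.logb, h3, mul_div_assoc']
  exact (div_le_div_iff_of_pos_right hlog2).mpr h6

lemma main_aux (ps pe : ℝ) (hps : 0 ≤ ps) (hpe : 0 ≤ pe) (hspe : ps + pe ≤ 1)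
    (SY : Finset (List Bool)) (SY3 : Finset (List (Option Bool)))
    (p : List Bool → ℝ) (q : List (Option Bool) → ℝ)
    (j : List (Option Bool) → List Bool → ℝ)
    (hjnn : ∀ z y, 0 ≤ j z y)
    (hqnn : ∀ z, 0 ≤ q z)
    (hpnn : ∀ y, 0 ≤ p y)
    (hjp : ∀ z y, j z y ≤ p y) (hjq : ∀ z y, j z y ≤ q z)
    (hjW : ∀ y, 0 < p y → ∀ z, j z y = p y * sersWL ps pe z y)
    (hmargq : ∀ z, ∑ y ∈ SY, j z y = q z)
    (hmargp : ∀ y, ∑ z ∈ SY3, j z y = p y)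
    (hsumq : ∑ z ∈ SY3, q z = 1)
    (hq0 : ∀ z ∉ SY3, q z = 0) :
    -∑ z ∈ SY3, q z * Real.logb 2 (q z)
      ≥ (-∑ y ∈ SY, p y * Real.logb 2 (p y)) - (∑ y ∈ SY, p y * (y.length : ℝ)) *
        Real.logb 2 ((1 - pe) ^ 2 + 2 * pe ^ 2) := by
  have hpe1 : pe ≤ 1 := by linarith
  have hlog2 : 0 < Real.log 2 := Real.log_pos (by norm_num)
  set L : ℝ := pe * Real.logb 2 (2 * pe) + (1 - pe) * Real.logb 2 (1 - pe) with hLdef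
  -- pointwise KL bound
  have key1 : ∀ z ∈ SY3, ∀ y ∈ SY,
      (j z y - q z * sersWL ps pe z y / sersSL pe z) / Real.log 2
        ≤ j z y * (Real.logb 2 (p y) + Real.logb 2 (sersSL pe z) - Real.logb 2 (q z)) := by
    intro z _ y _
    rcases eq_or_lt_of_le (hjnn z y) with hj0 | hjpos
    · rw [← hj0, zero_mul]
      apply div_nonpos_of_nonpos_of_nonneg _ hlog2.le
      have hb : 0 ≤ q z * sersWL ps pe z y / sersSL pe z :=
        div_nonneg (mul_nonneg (hqnn z) (sersWL_nonneg hps hpe hspe z y))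
          (sersSL_nonneg hpe hpe1 z)
      linarith
    · have hppos : 0 < p y := lt_of_lt_of_le hjpos (hjp z y)
      have hqpos : 0 < q z := lt_of_lt_of_le hjpos (hjq z y)
      have hjeq : j z y = p y * sersWL ps pe z y := hjW y hppos z
      have hWpos : 0 < sersWL ps pe z y := by
        rcases eq_or_lt_of_le (sersWL_nonneg hps hpe hspe z y) with hW0 | hW
        · rw [hjeq, ← hW0, mul_zero] at hjpos; exact absurd hjpos (lt_irrefl 0)
        · exact hW
      have hSLpos : 0 < sersSL pe z := sersSL_pos_of_WL_pos hps hpe hspe hWpos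
      have hb : 0 < q z * sersWL ps pe z y / sersSL pe z := by positivity
      have hiden : Real.logb 2 (p y) + Real.logb 2 (sersSL pe z) - Real.logb 2 (q z)
          = Real.logb 2 (j z y / (q z * sersWL ps pe z y / sersSL pe z)) := by
        rw [hjeq, show p y * sersWL ps pe z y / (q z * sersWL ps pe z y / sersSL pe z)
            = p y * sersSL pe z / q z from by field_simp]
        rw [Real.logb_div (by positivity) hqpos.ne',
          Real.logb_mul hppos.ne' hSLpos.ne']
      rw [hiden]
      exact kl_pointwise hjpos hb
  -- total mass of b
  have hsumb : ∑ z ∈ SY3, ∑ y ∈ SY, q z * sersWL ps pe z y / sersSL pe z ≤ 1 := by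
    rw [← hsumq]
    apply Finset.sum_le_sum
    intro z _
    have : ∑ y ∈ SY, q z * sersWL ps pe z y / sersSL pe z
        = q z * (∑ y ∈ SY, sersWL ps pe z y) / sersSL pe z := by
      rw [Finset.mul_sum, Finset.sum_div]
    rw [this]
    rcases eq_or_lt_of_le (sersSL_nonneg hpe hpe1 z) with hSL0 | hSLpos
    · rw [← hSL0, div_zero]; exact hqnn z
    · rw [div_le_iff₀ hSLpos]
      exact mul_le_mul_of_nonneg_left (sersWL_col_bound hps hpe hspe z SY) (hqnn z)
  have hsumj : ∑ z ∈ SY3, ∑ y ∈ SY, j z y = 1 := by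
    simp only [hmargq]; exact hsumq
  -- key nonnegativity
  have key : 0 ≤ ∑ z ∈ SY3, ∑ y ∈ SY,
      j z y * (Real.logb 2 (p y) + Real.logb 2 (sersSL pe z) - Real.logb 2 (q z)) := by
    have step := Finset.sum_le_sum (fun z hz =>
      Finset.sum_le_sum (fun y hy => key1 z hz y hy))
    have lhs_eq : ∑ z ∈ SY3, ∑ y ∈ SY,
        (j z y - q z * sersWL ps pe z y / sersSL pe z) / Real.log 2
        = ((∑ z ∈ SY3, ∑ y ∈ SY, j z y)
          - ∑ z ∈ SY3, ∑ y ∈ SY, q z * sersWL ps pe z y / sersSL pe z) / Real.log 2 := by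
      simp only [sub_div, Finset.sum_sub_distrib, Finset.sum_div]
    have : (0:ℝ) ≤ ((∑ z ∈ SY3, ∑ y ∈ SY, j z y)
          - ∑ z ∈ SY3, ∑ y ∈ SY, q z * sersWL ps pe z y / sersSL pe z) / Real.log 2 := by
      apply div_nonneg _ hlog2.le
      rw [hsumj]
      linarith
    calc (0:ℝ) ≤ _ := this
      _ = _ := lhs_eq.symm
      _ ≤ _ := step
  -- expand the three sums
  have SA : ∑ z ∈ SY3, ∑ y ∈ SY, j z y * Real.logb 2 (p y)
      = ∑ y ∈ SY, p y * Real.logb 2 (p y) := by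
    rw [Finset.sum_comm]
    apply Finset.sum_congr rfl
    intro y _
    rw [← Finset.sum_mul, hmargp]
  have SC : ∑ z ∈ SY3, ∑ y ∈ SY, j z y * Real.logb 2 (q z)
      = ∑ z ∈ SY3, q z * Real.logb 2 (q z) := by
    apply Finset.sum_congr rfl
    intro z _
    rw [← Finset.sum_mul, hmargq]
  have SB : ∑ z ∈ SY3, ∑ y ∈ SY, j z y * Real.logb 2 (sersSL pe z)
      = (∑ y ∈ SY, p y * (y.length : ℝ)) * L := by
    rw [Finset.sum_comm, Finset.sum_mul]
    apply Finset.sum_congr rfl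
    intro y _
    rcases eq_or_lt_of_le (hpnn y) with hp0' | hppos
    · have hz : ∀ z ∈ SY3, j z y * Real.logb 2 (sersSL pe z) = 0 := by
        intro z _
        have : j z y = 0 :=
          le_antisymm (le_trans (hjp z y) (le_of_eq hp0'.symm)) (hjnn z y)
        rw [this, zero_mul]
      rw [Finset.sum_eq_zero hz, ← hp0']
      ring
    · have hjweq : ∀ z ∈ SY3, j z y * Real.logb 2 (sersSL pe z)
          = p y * (sersWL ps pe z y * Real.logb 2 (sersSL pe z)) := by
        intro z _
        rw [hjW y hppos z]; ring
      rw [Finset.sum_congr rfl hjweq, ← Finset.mul_sum]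
      have hT : ∀ z, z.length = y.length → z ∉ SY3 → sersWL ps pe z y = 0 := by
        intro z _ hzT
        have hj0 : j z y = 0 :=
          le_antisymm (le_trans (hjq z y) (le_of_eq (hq0 z hzT))) (hjnn z y)
        have := hjW y hppos z
        rw [hj0] at this
        rcases mul_eq_zero.mp this.symm with h | h
        · exact absurd h hppos.ne'
        · exact h
      rw [sersWL_logsum hps hpe hspe y SY3 hT]
      ring
  have expand : ∑ z ∈ SY3, ∑ y ∈ SY,
      j z y * (Real.logb 2 (p y) + Real.logb 2 (sersSL pe z) - Real.logb 2 (q z))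
      = (∑ y ∈ SY, p y * Real.logb 2 (p y))
        + (∑ y ∈ SY, p y * (y.length : ℝ)) * L
        - ∑ z ∈ SY3, q z * Real.logb 2 (q z) := by
    rw [← SA, ← SB, ← SC]
    simp only [mul_add, mul_sub, Finset.sum_add_distrib, Finset.sum_sub_distrib]
  rw [expand] at key
  -- conclude
  have hexplen_nn : 0 ≤ ∑ y ∈ SY, p y * (y.length : ℝ) :=
    Finset.sum_nonneg fun y _ => mul_nonneg (hpnn y) (Nat.cast_nonneg _)
  have hLle : L ≤ Real.logb 2 ((1 - pe) ^ 2 + 2 * pe ^ 2) := sersL_le_logK hpe hpe1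
  nlinarith [mul_le_mul_of_nonneg_left hLle hexplen_nn]

/-- for the substitution/erasure kernel,
`H(Y⁽³⁾) ≥ H(Y) − E[|Y|]·log₂((1−pe)² + 2pe²)`. -/
theorem stmt9 {Ω : Type*} [Fintype Ω] (μ : FinProb Ω)
    (ps pe : ℝ) (hps : 0 ≤ ps) (hpe : 0 ≤ pe) (hspe : ps + pe ≤ 1)
    (Y : Ω → List Bool) (Y3 : Ω → List (Option Bool))
    (hlen : ∀ ω, (Y3 ω).length = (Y ω).length)
    (hcond : ∀ (n : ℕ) (y : Fin n → Bool) (y' : Fin n → Option Bool),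
      0 < pr μ (fun ω => Y ω = List.ofFn y) →
      pr μ (fun ω => Y3 ω = List.ofFn y' ∧ Y ω = List.ofFn y) /
        pr μ (fun ω => Y ω = List.ofFn y) = ∏ i, subErsKernel ps pe (y i) (y' i)) :
    entropy μ Y3 ≥ entropy μ Y - expLen μ Y * Real.logb 2 ((1 - pe) ^ 2 + 2 * pe ^ 2) := by
  have hjW : ∀ y : List Bool, 0 < pr μ (fun ω => Y ω = y) → ∀ z : List (Option Bool),
      pr μ (fun ω => Y3 ω = z ∧ Y ω = y)
        = pr μ (fun ω => Y ω = y) * sersWL ps pe z y := by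
    intro y hpy z
    by_cases hl : y.length = z.length
    · obtain ⟨n, f, rfl⟩ := exists_ofFn y
      have hzn : z.length = n := by rw [← hl]; simp
      obtain ⟨g, rfl⟩ := list_eq_ofFn hzn
      have hc := hcond n f g hpy
      rw [div_eq_iff (ne_of_gt hpy)] at hc
      rw [hc, sersWL_ofFn, mul_comm]
    · have hWL : sersWL ps pe z y = 0 := by rw [sersWL, if_neg hl]
      have hj0 : pr μ (fun ω => Y3 ω = z ∧ Y ω = y) = 0 := by
        apply pr_eq_zero_of
        rintro ω ⟨h3, hY⟩
        exact hl (by rw [← hY, ← h3, hlen ω])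
      rw [hj0, hWL, mul_zero]
  have hmargq : ∀ z : List (Option Bool),
      ∑ y ∈ (@Finset.image Ω (List Bool) (fun a b => propDecidable (a = b)) Y Finset.univ), pr μ (fun ω => Y3 ω = z ∧ Y ω = y)
        = pr μ (fun ω => Y3 ω = z) := by
    intro z
    rw [← @pr_fiber_sum Ω _ μ (List Bool) (fun a b => propDecidable (a = b)) Y (fun ω => Y3 ω = z)]
    exact Finset.sum_congr rfl fun y _ => pr_congr μ (fun ω => and_comm)
  have hmargp : ∀ y : List Bool,
      ∑ z ∈ (@Finset.image Ω (List (Option Bool)) (fun a b => propDecidable (a = b)) Y3 Finset.univ), pr μ (fun ω => Y3 ω = z ∧ Y ω = y)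
        = pr μ (fun ω => Y ω = y) :=
    fun y => @pr_fiber_sum Ω _ μ (List (Option Bool)) (fun a b => propDecidable (a = b)) Y3 (fun ω => Y ω = y)
  have hsumq : ∑ z ∈ (@Finset.image Ω (List (Option Bool)) (fun a b => propDecidable (a = b)) Y3 Finset.univ), pr μ (fun ω => Y3 ω = z) = 1 := by
    have h1 := @pr_fiber_sum Ω _ μ (List (Option Bool)) (fun a b => propDecidable (a = b)) Y3 (fun _ => True)
    rw [pr_univ μ] at h1
    rw [← h1]
    exact Finset.sum_congr rfl fun z _ => pr_congr μ (fun ω => (and_iff_left trivial).symm)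
  have hq0 : ∀ z ∉ (@Finset.image Ω (List (Option Bool)) (fun a b => propDecidable (a = b)) Y3 Finset.univ), pr μ (fun ω => Y3 ω = z) = 0 := by
    intro z hz
    apply pr_eq_zero_of
    intro ω hω
    exact hz (hω ▸ @Finset.mem_image_of_mem Ω (List (Option Bool)) (fun a b => propDecidable (a = b)) Finset.univ Y3 ω (Finset.mem_univ ω))
  have main := main_aux ps pe hps hpe hspe ((@Finset.image Ω (List Bool) (fun a b => propDecidable (a = b)) Y Finset.univ)) ((@Finset.image Ω (List (Option Bool)) (fun a b => propDecidable (a = b)) Y3 Finset.univ))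
    (fun y => pr μ (fun ω => Y ω = y)) (fun z => pr μ (fun ω => Y3 ω = z))
    (fun z y => pr μ (fun ω => Y3 ω = z ∧ Y ω = y))
    (fun z y => pr_nonneg μ _) (fun z => pr_nonneg μ _) (fun y => pr_nonneg μ _)
    (fun z y => pr_mono μ (fun ω h => h.2)) (fun z y => pr_mono μ (fun ω h => h.1))
    hjW hmargq hmargp hsumq hq0
  have hEL : expLen μ Y
      = ∑ y ∈ (@Finset.image Ω (List Bool) (fun a b => propDecidable (a = b)) Y Finset.univ), pr μ (fun ω => Y ω = y) * (y.length : ℝ) := by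
    rw [show (∑ y ∈ (@Finset.image Ω (List Bool) (fun a b => propDecidable (a = b)) Y Finset.univ), pr μ (fun ω => Y ω = y) * (y.length : ℝ))
        = ∑ ω, μ.p ω * ((Y ω).length : ℝ) from
          @sum_fiber Ω _ μ (List Bool) (fun a b => propDecidable (a = b)) Y (fun y => (y.length : ℝ))]
    rfl
  show entropy μ Y3 ≥ entropy μ Y - expLen μ Y * Real.logb 2 ((1 - pe) ^ 2 + 2 * pe ^ 2)
  rw [show entropy μ Y3 = -∑ z ∈ (@Finset.image Ω (List (Option Bool)) (fun a b => propDecidable (a = b)) Y3 Finset.univ),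
      pr μ (fun ω => Y3 ω = z) * Real.logb 2 (pr μ (fun ω => Y3 ω = z)) from rfl,
    show entropy μ Y = -∑ y ∈ (@Finset.image Ω (List Bool) (fun a b => propDecidable (a = b)) Y Finset.univ),
      pr μ (fun ω => Y ω = y) * Real.logb 2 (pr μ (fun ω => Y ω = y)) from rfl, hEL]
  exact main

end
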